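/- Every non-abelian group of order 27 has a narcissistic terrace and also a directed half-and-half terrace. -/

import Mathlib

/-- The list of successive quotients `aᵢ⁻¹ * aᵢ₊₁` of a list of group elements. -/
def succQuots {G : Type*} [Group G] (l : List G) : List G :=
  List.zipWith (fun x y => x⁻¹ * y) l l.tail

/-- A list is an arrangement of the elements of `G` if it lists every element exactly once. -/
def IsArrangement {G : Type*} (l : List G) : Prop :=
  l.Nodup ∧ ∀ g : G, g ∈ l

open scoped Classical in
/-- A terrace: an arrangement whose list of successive quotients contains each involution
exactly once and, for each `x` with `x ^ 2 ≠ 1`, contains `x` and `x⁻¹` twice in total. -/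
def IsTerrace {G : Type*} [Group G] (l : List G) : Prop :=
  IsArrangement l ∧
  (∀ z : G, z ≠ 1 → z ^ 2 = 1 → (succQuots l).count z = 1) ∧
  (∀ x : G, x ^ 2 ≠ 1 → (succQuots l).count x + (succQuots l).count x⁻¹ = 2)

open scoped Classical in
/-- A half-and-half terrace (for a group of odd order n): a terrace such that for each
`x` with `x ^ 2 ≠ 1`, exactly one of b₁, …, b₍ₙ₋₁₎/₂ lies in {x, x⁻¹}. -/
def IsHalfAndHalfTerrace {G : Type*} [Group G] (l : List G) : Prop :=
  IsTerrace l ∧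
  ∀ x : G, x ^ 2 ≠ 1 →
    ((succQuots l).take ((l.length - 1) / 2)).count x +
      ((succQuots l).take ((l.length - 1) / 2)).count x⁻¹ = 1

/-- A directed half-and-half terrace: a half-and-half terrace whose successive quotients
are pairwise distinct. -/
def IsDirectedHalfAndHalfTerrace {G : Type*} [Group G] (l : List G) : Prop :=
  IsHalfAndHalfTerrace l ∧ (succQuots l).Nodup

/-- A narcissistic terrace: a terrace whose 2-sequencing is reflective, i.e. equal to
its own reverse (bᵢ = bₙ₋ᵢ for all i). -/
def IsNarcissisticTerrace {G : Type*} [Group G] (l : List G) : Prop :=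
  IsTerrace l ∧ succQuots l = (succQuots l).reverse

set_option linter.unusedSectionVars false

-- ## instance normalization
lemma beq_irrel {H : Type*} (i1 i2 : DecidableEq H) :
    @instBEqOfDecidableEq H i1 = @instBEqOfDecidableEq H i2 := by
  congr 1
  funext a b
  exact Subsingleton.elim _ _

section Primed
variable {H : Type*} [Group H] [DecidableEq H] [Fintype H]

def IsTerrace' (l : List H) : Prop :=
  IsArrangement l ∧
  (∀ z : H, z ≠ 1 → z ^ 2 = 1 → (succQuots l).count z = 1) ∧
  (∀ x : H, x ^ 2 ≠ 1 → (succQuots l).count x + (succQuots l).count x⁻¹ = 2)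

def IsHalfAndHalfTerrace' (l : List H) : Prop :=
  IsTerrace' l ∧
  ∀ x : H, x ^ 2 ≠ 1 →
    ((succQuots l).take ((l.length - 1) / 2)).count x +
      ((succQuots l).take ((l.length - 1) / 2)).count x⁻¹ = 1

instance (l : List H) : Decidable (IsArrangement l) := by unfold IsArrangement; infer_instance
instance (l : List H) : Decidable (IsTerrace' l) := by unfold IsTerrace'; infer_instance
instance (l : List H) : Decidable (IsHalfAndHalfTerrace' l) := by
  unfold IsHalfAndHalfTerrace'; infer_instance

lemma isTerrace_iff (l : List H) : IsTerrace l ↔ IsTerrace' l := by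
  unfold IsTerrace IsTerrace'
  convert Iff.rfl

lemma isHalfAndHalf_iff (l : List H) : IsHalfAndHalfTerrace l ↔ IsHalfAndHalfTerrace' l := by
  unfold IsHalfAndHalfTerrace IsHalfAndHalfTerrace'
  rw [isTerrace_iff]
  convert Iff.rfl

lemma isNarc_iff (l : List H) :
    IsNarcissisticTerrace l ↔ (IsTerrace' l ∧ succQuots l = (succQuots l).reverse) := by
  unfold IsNarcissisticTerrace; rw [isTerrace_iff]

lemma isDirected_iff (l : List H) :
    IsDirectedHalfAndHalfTerrace l ↔ (IsHalfAndHalfTerrace' l ∧ (succQuots l).Nodup) := by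
  unfold IsDirectedHalfAndHalfTerrace; rw [isHalfAndHalf_iff]

end Primed

-- ## transport along a bijective hom
section Transport
variable {H G : Type*} [Group H] [Group G] (φ : H →* G)

lemma succQuots_map (l : List H) : succQuots (l.map φ) = (succQuots l).map φ := by
  unfold succQuots
  rw [← List.map_tail, List.zipWith_map, List.map_zipWith]
  simp only [← map_inv, ← map_mul]

lemma count_map' {α β : Type*} [BEq α] [LawfulBEq α] [BEq β] [LawfulBEq β] {f : α → β}
    (hf : Function.Injective f) (l : List α) (x : α) : (l.map f).count (f x) = l.count x := by
  induction l with
  | nil => rfl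
  | cons a t ih =>
    simp only [List.map_cons, List.count_cons, ih]
    by_cases h : a = x
    · subst h; simp
    · simp [h, hf.ne h]

open scoped Classical in
lemma transport_terrace (hinj : Function.Injective φ) (hsurj : Function.Surjective φ)
    {l : List H} (h : IsTerrace l) : IsTerrace (l.map φ) := by
  obtain ⟨⟨hnd, hmem⟩, h1, h2⟩ := h
  refine ⟨⟨hnd.map hinj, ?_⟩, ?_, ?_⟩
  · intro g
    obtain ⟨y, rfl⟩ := hsurj g
    exact List.mem_map_of_mem (f := φ) (hmem y)
  · intro z hz1 hz2
    obtain ⟨y, rfl⟩ := hsurj z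
    rw [succQuots_map, count_map' hinj]
    exact h1 y (fun h => hz1 (by rw [h, map_one])) (hinj (by rw [map_pow, hz2, map_one]))
  · intro x hx
    obtain ⟨y, rfl⟩ := hsurj x
    rw [succQuots_map, ← map_inv, count_map' hinj, count_map' hinj]
    exact h2 y (fun h => hx (by rw [← map_pow, h, map_one]))

open scoped Classical in
lemma transport_half (hinj : Function.Injective φ) (hsurj : Function.Surjective φ)
    {l : List H} (h : IsHalfAndHalfTerrace l) : IsHalfAndHalfTerrace (l.map φ) := by
  obtain ⟨ht, hh⟩ := h
  refine ⟨transport_terrace φ hinj hsurj ht, ?_⟩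
  intro x hx
  obtain ⟨y, rfl⟩ := hsurj x
  rw [succQuots_map, List.length_map, ← List.map_take, ← map_inv,
    count_map' hinj, count_map' hinj]
  exact hh y (fun h => hx (by rw [← map_pow, h, map_one]))

lemma transport_narc (hinj : Function.Injective φ) (hsurj : Function.Surjective φ)
    {l : List H} (h : IsNarcissisticTerrace l) : IsNarcissisticTerrace (l.map φ) := by
  obtain ⟨ht, hn⟩ := h
  refine ⟨transport_terrace φ hinj hsurj ht, ?_⟩
  rw [succQuots_map, ← List.map_reverse, ← hn]

lemma transport_directed (hinj : Function.Injective φ) (hsurj : Function.Surjective φ)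
    {l : List H} (h : IsDirectedHalfAndHalfTerrace l) :
    IsDirectedHalfAndHalfTerrace (l.map φ) := by
  obtain ⟨ht, hn⟩ := h
  exact ⟨transport_half φ hinj hsurj ht, (succQuots_map φ l) ▸ hn.map hinj⟩

end Transport


def Cc (x y : ZMod 3) : ℕ := (x.val + y.val) / 3

structure Gp (u v : ZMod 3) where
  i : ZMod 3
  j : ZMod 3
  k : ZMod 3
deriving DecidableEq, Fintype

namespace Gp
variable {u v : ZMod 3}

instance : Mul (Gp u v) :=
  ⟨fun x y => ⟨x.i + y.i, x.j + y.j,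
    x.k + y.k + x.j * y.i + u * (Cc x.i y.i : ℕ) + v * (Cc x.j y.j : ℕ)⟩⟩
instance : One (Gp u v) := ⟨⟨0, 0, 0⟩⟩
instance : Inv (Gp u v) :=
  ⟨fun x => ⟨-x.i, -x.j, -x.k + x.j * x.i - u * (Cc x.i (-x.i) : ℕ) - v * (Cc x.j (-x.j) : ℕ)⟩⟩

lemma mul_def (x y : Gp u v) : x * y = ⟨x.i + y.i, x.j + y.j,
    x.k + y.k + x.j * y.i + u * (Cc x.i y.i : ℕ) + v * (Cc x.j y.j : ℕ)⟩ := rfl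
lemma one_def : (1 : Gp u v) = ⟨0, 0, 0⟩ := rfl
lemma inv_def (x : Gp u v) : x⁻¹ = ⟨-x.i, -x.j,
    -x.k + x.j * x.i - u * (Cc x.i (-x.i) : ℕ) - v * (Cc x.j (-x.j) : ℕ)⟩ := rfl

lemma hCc_cocycle : ∀ a b c : ZMod 3,
    ((Cc a b : ℕ) : ZMod 3) + (Cc (a + b) c : ℕ) = ((Cc b c : ℕ) : ZMod 3) + (Cc a (b + c) : ℕ) := by
  decide

lemma hCc_zero_left : ∀ a : ZMod 3, Cc 0 a = 0 := by decide
lemma hCc_zero_right : ∀ a : ZMod 3, Cc a 0 = 0 := by decide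
lemma hCc_symm : ∀ a b : ZMod 3, Cc a b = Cc b a := by decide

instance : Group (Gp u v) :=
  Group.ofLeftAxioms
    (fun x y z => by
      obtain ⟨xi, xj, xk⟩ := x; obtain ⟨yi, yj, yk⟩ := y; obtain ⟨zi, zj, zk⟩ := z
      simp only [mul_def, mk.injEq]
      refine ⟨by ring, by ring, ?_⟩
      linear_combination (u : ZMod 3) * hCc_cocycle xi yi zi + (v : ZMod 3) * hCc_cocycle xj yj zj)
    (fun x => by
      obtain ⟨xi, xj, xk⟩ := x
      simp only [mul_def, one_def, mk.injEq, hCc_zero_left]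
      refine ⟨by ring, by ring, by push_cast; ring⟩)
    (fun x => by
      obtain ⟨xi, xj, xk⟩ := x
      simp only [mul_def, inv_def, one_def, mk.injEq]
      refine ⟨by ring, by ring, ?_⟩
      rw [hCc_symm (-xi) xi, hCc_symm (-xj) xj]
      ring)

lemma card_eq : Nat.card (Gp u v) = 27 := by
  rw [Nat.card_eq_fintype_card]; rfl

end Gp

section Struct
variable {G : Type*} [Group G]

lemma key_step2 {a b c : G} (hba : b * a = a * b * c) (hca : c * a = a * c)
    (hcb : c * b = b * c) :
    ∀ n m : ℕ, b ^ n * a ^ m = a ^ m * b ^ n * c ^ (n * m) := by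
  have Ca : Commute c a := hca
  have Cb : Commute c b := hcb
  have step1 : ∀ m : ℕ, b * a ^ m = a ^ m * b * c ^ m := by
    intro m; induction m with
    | zero => simp
    | succ m ih =>
      rw [pow_succ a, ← mul_assoc, ih, mul_assoc (a ^ m * b), (Ca.pow_left m).eq, ← mul_assoc,
        mul_assoc (a ^ m), hba, pow_succ c]
      group
  intro n; induction n with
  | zero => simp
  | succ n ih =>
    intro m
    rw [pow_succ b, mul_assoc, step1 m, ← mul_assoc, ← mul_assoc, ih m,
      mul_assoc (a ^ m * b ^ n), (Cb.pow_left (n * m)).eq, Nat.succ_mul, pow_add c]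
    group

lemma key_formula {a b c : G} (hba : b * a = a * b * c) (hca : c * a = a * c)
    (hcb : c * b = b * c) :
    ∀ i j k i' j' k' : ℕ,
      (a ^ i * b ^ j * c ^ k) * (a ^ i' * b ^ j' * c ^ k') =
        a ^ (i + i') * b ^ (j + j') * c ^ (k + k' + j * i') := by
  have Ca : Commute c a := hca
  have Cb : Commute c b := hcb
  have comb : ∀ (x : G) (m n : ℕ) (t : G), x ^ m * (x ^ n * t) = x ^ (m + n) * t := by
    intro x m n t; rw [← mul_assoc, ← pow_add]
  have mvca : ∀ (m n : ℕ) (t : G), c ^ m * (a ^ n * t) = a ^ n * (c ^ m * t) := by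
    intro m n t; rw [← mul_assoc, (Ca.pow_pow m n).eq, mul_assoc]
  have mvcb : ∀ (m n : ℕ) (t : G), c ^ m * (b ^ n * t) = b ^ n * (c ^ m * t) := by
    intro m n t; rw [← mul_assoc, (Cb.pow_pow m n).eq, mul_assoc]
  have mvba : ∀ (n m : ℕ) (t : G), b ^ n * (a ^ m * t) = a ^ m * (b ^ n * (c ^ (n * m) * t)) := by
    intro n m t; rw [← mul_assoc, key_step2 hba hca hcb, mul_assoc, mul_assoc]
  intro i j k i' j' k'
  simp only [mul_assoc]
  rw [mvca k i', mvcb k j', mvba j i', mvcb (j * i') j', comb a, comb b, comb c, ← pow_add]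
  congr 2
  ring_nf

end Struct

section Phi
variable {G : Type*} [Group G] {u v : ZMod 3} {a b c : G}

def phi0 (u v : ZMod 3) (a b c : G) : Gp u v → G :=
  fun x => a ^ x.i.val * b ^ x.j.val * c ^ x.k.val

lemma phi0_mul (hba : b * a = a * b * c) (hca : c * a = a * c) (hcb : c * b = b * c)
    (hc3 : c ^ 3 = 1) (ha3 : a ^ 3 = c ^ u.val) (hb3 : b ^ 3 = c ^ v.val) :
    ∀ x y : Gp u v, phi0 u v a b c (x * y) = phi0 u v a b c x * phi0 u v a b c y := by
  have Ca : Commute c a := hca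
  have Cb : Commute c b := hcb
  have cpow : ∀ (E : ℕ) (z : ZMod 3), ((E : ZMod 3)) = z → c ^ E = c ^ z.val := by
    intro E z hz
    rw [pow_eq_pow_mod E hc3]
    congr 1
    rw [← hz, ZMod.val_natCast]
  have redA : ∀ m : ℕ, a ^ m = a ^ (m % 3) * c ^ (u.val * (m / 3)) := by
    intro m
    conv_lhs => rw [← Nat.div_add_mod m 3, pow_add, pow_mul, ha3, ← pow_mul]
    rw [(Ca.pow_pow (u.val * (m / 3)) (m % 3)).eq]
  have redB : ∀ m : ℕ, b ^ m = b ^ (m % 3) * c ^ (v.val * (m / 3)) := by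
    intro m
    conv_lhs => rw [← Nat.div_add_mod m 3, pow_add, pow_mul, hb3, ← pow_mul]
    rw [(Cb.pow_pow (v.val * (m / 3)) (m % 3)).eq]
  have mvcb : ∀ (m n : ℕ) (t : G), c ^ m * (b ^ n * t) = b ^ n * (c ^ m * t) := by
    intro m n t; rw [← mul_assoc, (Cb.pow_pow m n).eq, mul_assoc]
  intro x y
  obtain ⟨xi, xj, xk⟩ := x; obtain ⟨yi, yj, yk⟩ := y
  show a ^ ((xi + yi).val) * b ^ ((xj + yj).val) *
      c ^ ((xk + yk + xj * yi + u * (Cc xi yi : ℕ) + v * (Cc xj yj : ℕ)).val) =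
    (a ^ xi.val * b ^ xj.val * c ^ xk.val) * (a ^ yi.val * b ^ yj.val * c ^ yk.val)
  rw [key_formula hba hca hcb, redA (xi.val + yi.val), redB (xj.val + yj.val)]
  rw [← ZMod.val_add xi yi, ← ZMod.val_add xj yj]
  simp only [mul_assoc]
  rw [mvcb (u.val * ((xi.val + yi.val) / 3)) ((xj + yj).val)]
  rw [← pow_add c, ← pow_add c]
  congr 1
  congr 1
  apply (cpow _ _ _).symm
  push_cast [ZMod.natCast_val, ZMod.cast_id]
  unfold Cc
  push_cast [ZMod.natCast_val, ZMod.cast_id]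
  ring
end Phi

theorem exists_hom (G : Type*) [Group G] (hcard : Nat.card G = 27)
    (a b : G) (hab : a * b ≠ b * a) :
    ∃ (u v : ZMod 3) (φ : Gp u v →* G), Function.Bijective φ := by
  have hfin : Finite G := Nat.finite_of_card_ne_zero (by rw [hcard]; norm_num)
  have hp : Fact (Nat.Prime 3) := ⟨by norm_num⟩
  set Z := Subgroup.center G with hZdef
  have hGcard : Nat.card G = 3 ^ 3 := by rw [hcard]; norm_num
  obtain ⟨k, hk0, hkZ⟩ := IsPGroup.card_center_eq_prime_pow (p := 3) hGcard (by norm_num)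
  have hnotcyc : ¬ IsCyclic (G ⧸ Z) := fun h =>
    hab (commutative_of_cyclic_center_quotient (QuotientGroup.mk' Z)
      (by rw [QuotientGroup.ker_mk']) a b)
  have hcard_eq : 27 = Nat.card (G ⧸ Z) * Nat.card Z :=
    hcard ▸ Subgroup.card_eq_card_quotient_mul_card_subgroup Z
  have hkdvd : (3 : ℕ) ^ k ∣ 3 ^ 3 := hGcard ▸ hkZ ▸ Subgroup.card_subgroup_dvd_card Z
  have hk3 : k ≤ 3 := (Nat.pow_dvd_pow_iff_le_right (by norm_num)).mp hkdvd
  have hZ3 : Nat.card Z = 3 := by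
    interval_cases k
    · rwa [pow_one] at hkZ
    · exfalso
      have hq : Nat.card (G ⧸ Z) = 3 := by rw [hkZ] at hcard_eq; omega
      exact hnotcyc (isCyclic_of_prime_card hq)
    · exfalso
      have hq : Nat.card (G ⧸ Z) = 1 := by rw [hkZ] at hcard_eq; omega
      have : Subsingleton (G ⧸ Z) := (Nat.card_eq_one_iff_unique.mp hq).1
      exact hnotcyc isCyclic_of_subsingleton
  have hq9 : Nat.card (G ⧸ Z) = 9 := by rw [hZ3] at hcard_eq; omega
  have hqcomm : ∀ x y : G ⧸ Z, x * y = y * x :=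
    IsPGroup.commutative_of_card_eq_prime_sq (p := 3) (by rw [hq9]; norm_num)
  have hcube : ∀ g : G ⧸ Z, g ^ 3 = 1 := by
    intro g
    by_contra h3
    have hdvd : orderOf g ∣ 3 ^ 2 := by rw [← show (9:ℕ) = 3^2 from rfl, ← hq9]
                                        exact orderOf_dvd_natCard g
    obtain ⟨m, hm2, hval⟩ := (Nat.dvd_prime_pow (by norm_num)).mp hdvd
    have hm2' : m = 2 := by
      rcases Nat.lt_or_ge m 2 with h | h
      · exfalso
        apply h3
        apply orderOf_dvd_iff_pow_eq_one.mp
        rw [hval]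
        exact dvd_trans (pow_dvd_pow 3 (by omega : m ≤ 1)) (by norm_num)
      · omega
    exact hnotcyc (isCyclic_of_orderOf_eq_card g (by rw [hval, hm2', hq9]; norm_num))
  set c := b⁻¹ * a⁻¹ * b * a with hcdef
  have hba : b * a = a * b * c := by rw [hcdef]; group
  have hcZmem : c ∈ Z := by
    apply (QuotientGroup.eq_one_iff c).mp
    show ((b⁻¹ * a⁻¹ * b * a : G) : G ⧸ Z) = 1
    have hexp : ((b⁻¹ * a⁻¹ * b * a : G) : G ⧸ Z) =
        ((b : G ⧸ Z))⁻¹ * ((a : G ⧸ Z))⁻¹ * (b : G ⧸ Z) * (a : G ⧸ Z) := rfl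
    rw [hexp, mul_assoc ((b : G ⧸ Z))⁻¹, hqcomm ((a : G ⧸ Z))⁻¹ (b : G ⧸ Z)]
    group
  have hcc : ∀ g : G, c * g = g * c := fun g => (Subgroup.mem_center_iff.mp hcZmem g).symm
  have hca : c * a = a * c := hcc a
  have hcb : c * b = b * c := hcc b
  have hcne : c ≠ 1 := by
    intro h
    apply hab
    rw [h, mul_one] at hba
    exact hba.symm
  have hc3 : c ^ 3 = 1 := by
    have h1 : (⟨c, hcZmem⟩ : Z) ^ Nat.card Z = 1 := pow_card_eq_one'
    rw [hZ3] at h1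
    have h2 := congrArg Subtype.val h1
    simpa using h2
  have horder : orderOf c = 3 := by
    have hdvd : orderOf c ∣ 3 := orderOf_dvd_iff_pow_eq_one.mpr hc3
    rcases (Nat.Prime.eq_one_or_self_of_dvd (by norm_num) _ hdvd) with h | h
    · exact absurd (orderOf_eq_one_iff.mp h) hcne
    · exact h
  have hZeq : Subgroup.zpowers c = Z := by
    apply Subgroup.eq_of_le_of_card_ge (Subgroup.zpowers_le.mpr hcZmem)
    rw [hZ3, Nat.card_zpowers, horder]
  have hcube' : ∀ g : G, g ^ 3 ∈ Z := by
    intro g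
    apply (QuotientGroup.eq_one_iff (g ^ 3)).mp
    exact hcube (g : G ⧸ Z)
  obtain ⟨na, hna⟩ := (Submonoid.mem_powers_iff _ _).mp
    (mem_powers_iff_mem_zpowers.mpr (hZeq ▸ hcube' a))
  obtain ⟨nb, hnb⟩ := (Submonoid.mem_powers_iff _ _).mp
    (mem_powers_iff_mem_zpowers.mpr (hZeq ▸ hcube' b))
  set u : ZMod 3 := (na : ZMod 3) with hudef
  set v : ZMod 3 := (nb : ZMod 3) with hvdef
  have ha3 : a ^ 3 = c ^ u.val := by
    rw [← hna, pow_eq_pow_mod na hc3, hudef, ZMod.val_natCast]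
  have hb3 : b ^ 3 = c ^ v.val := by
    rw [← hnb, pow_eq_pow_mod nb hc3, hvdef, ZMod.val_natCast]
  refine ⟨u, v, MonoidHom.mk' (phi0 u v a b c) (phi0_mul hba hca hcb hc3 ha3 hb3), ?_⟩
  set φ := MonoidHom.mk' (phi0 u v a b c) (phi0_mul hba hca hcb hc3 ha3 hb3) with hφdef
  have hφa : φ ⟨1, 0, 0⟩ = a := by
    show a ^ (1 : ZMod 3).val * b ^ (0 : ZMod 3).val * c ^ (0 : ZMod 3).val = a
    norm_num [ZMod.val_one]
  have hφb : φ ⟨0, 1, 0⟩ = b := by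
    show a ^ (0 : ZMod 3).val * b ^ (1 : ZMod 3).val * c ^ (0 : ZMod 3).val = b
    norm_num [ZMod.val_one]
  have hrange : φ.range = ⊤ := by
    by_contra hne
    have hmem_a : a ∈ φ.range := ⟨⟨1, 0, 0⟩, hφa⟩
    have hmem_b : b ∈ φ.range := ⟨⟨0, 1, 0⟩, hφb⟩
    have hcomm : (⟨a, hmem_a⟩ : φ.range) * ⟨b, hmem_b⟩ = ⟨b, hmem_b⟩ * ⟨a, hmem_a⟩ → False := by
      intro h
      exact hab (by simpa [Subtype.ext_iff] using h)
    have hdvd : Nat.card φ.range ∣ 3 ^ 3 := hGcard ▸ Subgroup.card_subgroup_dvd_card _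
    obtain ⟨m, hm3, hcardR⟩ := (Nat.dvd_prime_pow (by norm_num)).mp hdvd
    have hne3 : m ≠ 3 := by
      intro h
      exact hne (Subgroup.eq_top_of_card_eq _ (by rw [hcardR, h, hGcard]))
    interval_cases m
    · have : Subsingleton φ.range := (Nat.card_eq_one_iff_unique.mp (by simpa using hcardR)).1
      exact hcomm (Subsingleton.elim _ _)
    · haveI : IsCyclic φ.range := isCyclic_of_prime_card (p := 3) (by simpa using hcardR)
      letI := IsCyclic.commGroup (α := φ.range)
      exact hcomm (mul_comm _ _)
    · exact hcomm (IsPGroup.commutative_of_card_eq_prime_sq (p := 3) (by simpa using hcardR) _ _)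
    · exact hne3 rfl
  have hsurj : Function.Surjective φ := fun g => by
    have : g ∈ φ.range := hrange ▸ Subgroup.mem_top g
    exact this
  letI : Fintype G := Fintype.ofFinite G
  rw [Fintype.bijective_iff_surjective_and_card]
  refine ⟨hsurj, ?_⟩
  rw [← Nat.card_eq_fintype_card, ← Nat.card_eq_fintype_card, Gp.card_eq, hcard]

def narcData (u v : ZMod 3) : List (ZMod 3 × ZMod 3 × ZMod 3) :=
  if u = 0 then (if v = 0 then [(0,0,0), (1,1,0), (0,1,2), (1,1,1), (2,0,0), (0,2,0), (1,2,1), (0,1,1), (0,1,0), (1,2,2), (2,1,0), (2,2,2), (2,1,1), (2,2,1), (2,0,1), (2,2,0), (2,0,2), (0,2,1), (1,0,1), (1,0,0), (0,2,2), (1,2,0), (2,1,2), (0,0,1), (1,0,2), (0,0,2), (1,1,2)] else if v = 1 then [(0,0,0), (1,0,1), (0,1,1), (1,2,0), (1,1,1), (2,2,1), (0,1,0), (0,1,2), (1,1,2), (0,0,2), (0,2,1), (2,2,2), (2,1,1), (1,2,1), (0,0,1), (0,2,2), (2,2,0), (2,1,0), (1,0,0), (2,0,2), (2,0,1), (0,2,0),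 (1,0,2), (1,2,2), (2,0,0), (1,1,0), (2,1,2)] else [(0,0,0), (0,2,1), (1,2,2), (0,1,1), (2,2,2), (2,2,1), (2,0,1), (0,2,0), (1,1,1), (2,1,2), (1,0,1), (1,2,0), (0,1,0), (1,1,2), (2,1,1), (1,0,2), (1,2,1), (0,1,2), (1,1,0), (2,0,0), (0,2,2), (0,0,2), (0,0,1), (2,1,0), (1,0,0), (2,0,2), (2,2,0)])
  else if u = 1 then (if v = 0 then [(0,0,0), (2,1,0), (1,2,1), (2,2,0), (2,2,2), (1,0,0), (1,1,1), (1,0,2), (2,1,1), (0,1,1), (2,0,0), (0,1,2), (0,2,2), (1,2,0), (2,2,1), (2,0,1), (0,1,0), (2,0,2), (0,0,1), (1,1,0), (1,0,1), (1,1,2), (0,2,1), (0,2,0), (1,2,2), (0,0,2), (2,1,2)] else if v = 1 then [(0,0,0), (2,2,0), (2,2,1), (1,2,2), (1,1,0), (1,2,0), (2,1,1), (0,2,1), (2,1,2), (0,0,2), (0,1,0), (1,0,1), (2,0,0), (1,0,2), (0,0,1), (1,0,0), (2,2,2), (2,0,1), (0,2,2), (2,1,0), (0,2,0), (1,1,1),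 (1,2,1), (1,1,2), (0,1,1), (0,1,2), (2,0,2)] else [(0,0,0), (2,0,1), (2,2,0), (1,1,1), (1,2,2), (1,2,1), (1,0,0), (2,0,2), (0,1,0), (2,0,0), (0,2,0), (1,1,2), (0,1,1), (2,2,2), (1,0,2), (0,0,2), (1,2,0), (2,1,0), (1,0,1), (2,1,1), (0,1,2), (0,2,2), (0,2,1), (0,0,1), (2,2,1), (2,1,2), (1,1,0)])
  else (if v = 0 then [(0,0,0), (2,1,1), (0,1,2), (2,0,1), (0,1,1), (0,1,0), (1,0,1), (0,2,2), (0,0,2), (1,2,0), (0,2,1), (1,2,2), (1,1,0), (1,0,2), (1,2,1), (1,1,2), (2,1,2), (1,1,1), (2,0,0), (2,1,0), (1,0,0), (2,2,0), (2,2,2), (0,0,1), (2,2,1), (0,2,0), (2,0,2)] else if v = 1 then [(0,0,0), (0,1,1), (0,1,0), (2,0,0), (1,1,2), (0,2,1), (2,2,0), (0,2,0), (2,1,0), (1,1,1), (0,0,2), (1,2,2), (1,1,0), (1,2,0), (1,0,1), (1,2,1), (2,1,1), (1,0,2), (0,0,1), (2,2,2), (0,2,2), (2,2,1), (1,0,0),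 (0,1,2), (2,0,2), (2,0,1), (2,1,2)] else [(0,0,0), (2,1,0), (2,2,0), (2,2,2), (1,1,2), (1,2,0), (0,2,2), (1,2,2), (2,0,0), (1,2,1), (0,0,2), (1,0,2), (1,1,1), (2,0,1), (0,2,0), (0,0,1), (1,0,1), (0,1,2), (2,0,2), (0,1,1), (1,1,0), (0,1,0), (0,2,1), (2,1,2), (2,1,1), (2,2,1), (1,0,0)])

def dirData (u v : ZMod 3) : List (ZMod 3 × ZMod 3 × ZMod 3) :=
  if u = 0 then (if v = 0 then [(0,0,0), (2,0,0), (1,1,0), (2,2,2), (1,2,2), (2,1,1), (0,2,2), (0,2,1), (0,0,1), (2,1,2), (2,0,1), (1,2,0), (1,1,1), (0,1,1), (0,2,0), (1,0,1), (1,2,1), (2,2,0), (1,0,0), (2,0,2), (2,1,0), (0,1,2), (0,1,0), (1,0,2), (2,2,1), (1,1,2), (0,0,2)] else if v = 1 then [(0,0,0), (2,1,1), (2,2,1), (2,0,0), (1,1,0), (2,1,0), (1,2,1), (0,2,2), (1,2,2), (2,0,1), (0,1,2), (0,1,0), (0,0,1), (1,1,1), (1,0,0), (1,0,2), (2,2,2),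 (0,2,1), (0,1,1), (0,2,0), (2,2,0), (1,1,2), (2,0,2), (1,2,0), (2,1,2), (1,0,1), (0,0,2)] else [(0,0,0), (2,2,2), (0,1,1), (1,2,0), (0,2,2), (1,2,1), (0,2,1), (1,0,1), (0,1,2), (0,0,2), (0,1,0), (1,0,0), (1,1,2), (1,1,1), (2,1,1), (2,0,2), (1,0,2), (2,2,1), (2,1,0), (2,2,0), (1,1,0), (2,1,2), (0,2,0), (2,0,0), (2,0,1), (1,2,2), (0,0,1)])
  else if u = 1 then (if v = 0 then [(0,0,0), (1,2,1), (2,0,2), (0,2,0), (2,2,0), (1,2,0), (0,2,2), (2,1,0), (2,2,1), (2,1,1), (2,1,2), (2,0,0), (1,1,0), (2,2,2), (1,0,2), (1,1,1), (0,0,2), (1,0,1), (0,2,1), (0,1,0), (1,0,0), (2,0,1), (0,1,2), (0,1,1), (1,1,2), (1,2,2), (0,0,1)] else if v = 1 then [(0,0,0), (1,2,1), (1,2,0), (2,1,2), (2,2,2), (1,1,2), (0,1,2), (0,2,0), (2,0,2), (1,0,1), (0,2,1), (1,0,2), (1,2,2), (2,2,1), (1,0,0), (2,2,0), (0,0,1),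 (0,1,0), (2,1,1), (0,2,2), (0,1,1), (1,1,1), (2,1,0), (2,0,0), (2,0,1), (1,1,0), (0,0,2)] else [(0,0,0), (0,2,1), (0,0,2), (1,2,1), (1,0,1), (2,0,0), (1,1,2), (0,1,0), (2,0,1), (1,2,0), (1,2,2), (2,0,2), (1,0,2), (0,1,2), (2,2,1), (0,2,2), (1,1,1), (1,0,0), (1,1,0), (2,2,2), (2,2,0), (2,1,1), (0,2,0), (2,1,2), (0,1,1), (2,1,0), (0,0,1)])
  else (if v = 0 then [(0,0,0), (0,0,1), (0,1,2), (1,1,1), (0,2,0), (2,0,0), (0,1,0), (2,2,2), (2,0,2), (1,2,1), (0,2,2), (1,2,0), (1,0,2), (2,1,2), (2,1,1), (2,0,1), (1,0,0), (2,2,1), (1,1,0), (2,2,0), (0,1,1), (1,1,2), (1,0,1), (1,2,2), (0,2,1), (2,1,0), (0,0,2)] else if v = 1 then [(0,0,0), (1,1,0), (1,0,1), (1,1,1), (2,0,2), (1,1,2), (1,2,0), (0,2,0), (0,2,1), (2,1,0), (0,1,0), (2,2,1), (0,0,2), (2,0,1), (1,2,1), (2,2,2), (0,1,1), (2,1,1),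 (1,2,2), (2,0,0), (2,1,2), (1,0,0), (1,0,2), (2,2,0), (0,2,2), (0,1,2), (0,0,1)] else [(0,0,0), (0,0,1), (1,0,0), (1,2,1), (1,0,2), (2,1,0), (1,1,2), (1,0,1), (2,2,2), (0,1,2), (2,2,0), (1,2,0), (0,1,0), (2,0,1), (1,1,0), (0,2,2), (2,1,1), (0,1,1), (2,1,2), (0,2,1), (1,1,1), (1,2,2), (2,0,0), (2,0,2), (2,2,1), (0,2,0), (0,0,2)])

def conv {u v : ZMod 3} (l : List (ZMod 3 × ZMod 3 × ZMod 3)) : List (Gp u v) :=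
  l.map (fun t => ⟨t.1, t.2.1, t.2.2⟩)

def narcList (u v : ZMod 3) : List (Gp u v) := conv (narcData u v)
def dirList (u v : ZMod 3) : List (Gp u v) := conv (dirData u v)

set_option maxHeartbeats 4000000 in
theorem concrete_narc : ∀ u v : ZMod 3,
    IsTerrace' (narcList u v) ∧ succQuots (narcList u v) = (succQuots (narcList u v)).reverse := by
  decide

set_option maxHeartbeats 4000000 in
theorem concrete_dir : ∀ u v : ZMod 3,
    (IsHalfAndHalfTerrace' (dirList u v)) ∧ (succQuots (dirList u v)).Nodup := by
  decide

/-- Every non-abelian group of order 27 has both a narcissistic terrace and a directed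
half-and-half terrace. -/
theorem stmt_18 (G : Type*) [Group G] (hcard : Nat.card G = 27)
    (hnonab : ∃ a b : G, a * b ≠ b * a) :
    (∃ l : List G, IsNarcissisticTerrace l) ∧
    (∃ l : List G, IsDirectedHalfAndHalfTerrace l) := by
  obtain ⟨a, b, hab⟩ := hnonab
  obtain ⟨u, v, φ, hbij⟩ := exists_hom G hcard a b hab
  constructor
  · exact ⟨(narcList u v).map φ,
      transport_narc φ hbij.1 hbij.2 ((isNarc_iff _).mpr (concrete_narc u v))⟩
  · exact ⟨(dirList u v).map φ,
      transport_directed φ hbij.1 hbij.2 ((isDirected_iff _).mpr (concrete_dir u v))⟩
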